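/- Let ℓ > 0 and let ω > 0 satisfy the transcendental equation (ℓ²ω² − 1)·sin ω = 2ℓω·cos ω. Define f : ℝ → ℝ by f(x) = cos(ωx) + sin(ωx)/(ℓω). Then for every x ∈ [0,1], ∫₀¹ exp(−|x − y|/ℓ) · f(y) dy = (2ℓ/(ℓ²ω² + 1)) · f(x). In other words, f is an eigenfunction of the Fredholm integral operator with the exponential covariance kernel on [0,1], with eigenvalue λ = 2ℓ/(ℓ²ω² + 1). -/

import Mathlib

/-- For a correlation length `ℓ > 0` and an admissible frequency `ω > 0`
(i.e. `(ℓ²ω² − 1)·sin ω = 2ℓω·cos ω`), the function `f(x) = cos(ωx) + sin(ωx)/(ℓω)` is an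
eigenfunction of the Fredholm integral operator with exponential covariance kernel
`exp(−|x−y|/ℓ)` on `[0,1]`, with eigenvalue `λ = 2ℓ/(ℓ²ω² + 1)`. -/
theorem expKernel_fredholm_eigenfunction
    (ℓ ω : ℝ) (hℓ : 0 < ℓ) (hω : 0 < ω)
    (hadm : (ℓ ^ 2 * ω ^ 2 - 1) * Real.sin ω = 2 * ℓ * ω * Real.cos ω)
    (f : ℝ → ℝ)
    (hf : ∀ x, f x = Real.cos (ω * x) + Real.sin (ω * x) / (ℓ * ω)) :
    ∀ x ∈ Set.Icc (0 : ℝ) 1,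
      ∫ y in (0 : ℝ)..1, Real.exp (-|x - y| / ℓ) * f y
        = (2 * ℓ / (ℓ ^ 2 * ω ^ 2 + 1)) * f x := by
  intro x hx
  obtain ⟨hx0, hx1⟩ := hx
  have hℓ' : ℓ ≠ 0 := ne_of_gt hℓ
  have hω' : ω ≠ 0 := ne_of_gt hω
  have hDpos : 0 < ℓ ^ 2 * ω ^ 2 + 1 := by positivity
  have hD' : ℓ ^ 2 * ω ^ 2 + 1 ≠ 0 := ne_of_gt hDpos
  have hfc : Continuous f := by
    have : f = fun x => Real.cos (ω * x) + Real.sin (ω * x) / (ℓ * ω) := funext hf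
    rw [this]; fun_prop
  have hcont : Continuous fun y : ℝ => Real.exp (-|x - y| / ℓ) * f y := by fun_prop
  -- antiderivative on the left piece
  set F : ℝ → ℝ := fun y => Real.exp ((y - x) / ℓ) * (Real.sin (ω * y) / ω) with hF
  have hFderiv : ∀ t : ℝ, HasDerivAt F (Real.exp ((t - x) / ℓ) * f t) t := by
    intro t
    have h1 : HasDerivAt (fun y : ℝ => Real.exp ((y - x) / ℓ))
        (Real.exp ((t - x) / ℓ) * (1 / ℓ)) t :=
      (((hasDerivAt_id t).sub_const x).div_const ℓ).exp
    have h2 : HasDerivAt (fun y : ℝ => Real.sin (ω * y) / ω)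
        (Real.cos (ω * t) * ω / ω) t := by
      simpa using (((hasDerivAt_id t).const_mul ω).sin).div_const ω
    have := h1.mul h2
    refine this.congr_deriv ?_
    rw [hf t]
    field_simp
    ring
  -- antiderivative on the right piece
  set H : ℝ → ℝ := fun y => Real.exp ((x - y) / ℓ) *
      ((-(2 * ℓ) * Real.cos (ω * y) + (ℓ ^ 2 * ω ^ 2 - 1) * Real.sin (ω * y) / ω)
        / (ℓ ^ 2 * ω ^ 2 + 1)) with hH
  have hHderiv : ∀ t : ℝ, HasDerivAt H (Real.exp ((x - t) / ℓ) * f t) t := by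
    intro t
    have h1 : HasDerivAt (fun y : ℝ => Real.exp ((x - y) / ℓ))
        (Real.exp ((x - t) / ℓ) * (-1 / ℓ)) t := by
      simpa using (((hasDerivAt_id t).const_sub x).div_const ℓ).exp
    have h2 : HasDerivAt (fun y : ℝ =>
        (-(2 * ℓ) * Real.cos (ω * y) + (ℓ ^ 2 * ω ^ 2 - 1) * Real.sin (ω * y) / ω)
          / (ℓ ^ 2 * ω ^ 2 + 1))
        ((-(2 * ℓ) * (-Real.sin (ω * t) * ω)
          + (ℓ ^ 2 * ω ^ 2 - 1) * (Real.cos (ω * t) * ω) / ω) / (ℓ ^ 2 * ω ^ 2 + 1)) t := by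
      simpa using ((((((hasDerivAt_id t).const_mul ω).cos).const_mul (-(2 * ℓ))).add
        (((((hasDerivAt_id t).const_mul ω).sin).const_mul (ℓ ^ 2 * ω ^ 2 - 1)).div_const ω)).div_const
        (ℓ ^ 2 * ω ^ 2 + 1))
    have := h1.mul h2
    refine this.congr_deriv ?_
    rw [hf t]
    field_simp
    ring
  have hsplit : (∫ y in (0 : ℝ)..1, Real.exp (-|x - y| / ℓ) * f y)
      = (∫ y in (0 : ℝ)..x, Real.exp (-|x - y| / ℓ) * f y)
        + ∫ y in x..1, Real.exp (-|x - y| / ℓ) * f y := by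
    rw [intervalIntegral.integral_add_adjacent_intervals] <;>
      exact (hcont.intervalIntegrable _ _)
  rw [hsplit]
  have h1 : (∫ y in (0 : ℝ)..x, Real.exp (-|x - y| / ℓ) * f y) = F x - F 0 := by
    have hcg : (∫ y in (0 : ℝ)..x, Real.exp (-|x - y| / ℓ) * f y)
        = ∫ y in (0 : ℝ)..x, Real.exp ((y - x) / ℓ) * f y := by
      apply intervalIntegral.integral_congr
      intro y hy
      rw [Set.uIcc_of_le hx0] at hy
      have h : |x - y| = x - y := abs_of_nonneg (by linarith [hy.2])
      show Real.exp (-|x - y| / ℓ) * f y = Real.exp ((y - x) / ℓ) * f y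
      rw [h, show -(x - y) / ℓ = (y - x) / ℓ by ring]
    rw [hcg]
    exact intervalIntegral.integral_eq_sub_of_hasDerivAt
      (fun t _ => hFderiv t)
      (((Real.continuous_exp.comp (by fun_prop)).mul hfc).intervalIntegrable _ _)
  have h2 : (∫ y in x..1, Real.exp (-|x - y| / ℓ) * f y) = H 1 - H x := by
    have hcg : (∫ y in x..1, Real.exp (-|x - y| / ℓ) * f y)
        = ∫ y in x..1, Real.exp ((x - y) / ℓ) * f y := by
      apply intervalIntegral.integral_congr
      intro y hy
      rw [Set.uIcc_of_le hx1] at hy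
      have h : |x - y| = y - x := by
        rw [abs_sub_comm]; exact abs_of_nonneg (by linarith [hy.1])
      show Real.exp (-|x - y| / ℓ) * f y = Real.exp ((x - y) / ℓ) * f y
      rw [h, show -(y - x) / ℓ = (x - y) / ℓ by ring]
    rw [hcg]
    exact intervalIntegral.integral_eq_sub_of_hasDerivAt
      (fun t _ => hHderiv t)
      (((Real.continuous_exp.comp (by fun_prop)).mul hfc).intervalIntegrable _ _)
  rw [h1, h2, hF, hH]
  simp only
  have hH1 : (-(2 * ℓ) * Real.cos (ω * 1) + (ℓ ^ 2 * ω ^ 2 - 1) * Real.sin (ω * 1) / ω) = 0 := by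
    rw [mul_one]
    field_simp
    linarith [hadm]
  rw [hH1]
  rw [hf x]
  simp [Real.exp_zero]
  field_simp
  ring
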